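/- Let H be a cocommutative Hopf algebra, A a cleft right H-comodule algebra with commutative coinvariant algebra B=A^{coH}, and suppose Ω_A={t∈Hom^H(H,A) : t an algebra map} is nonempty; fix t₀∈Ω_A and set u₀=t₀∘S. Then the bijection F: Z¹(H,B) → Ω_A, F(v)=v*t₀ (with inverse t ↦ t*u₀), sends cohomologous 1-cocycles to equivalent elements of Ω_A and conversely; hence F induces a bijection H¹(H,B) → Ω̄_A = Ω_A/∼, where t₁∼t₂ iff there exists an invertible b∈B with b t₁(h) = t₂(h) b for all h∈H. -/

import Mathlib

open TensorProduct Coalgebra HopfAlgebra LinearMap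

noncomputable section

universe u

variable {k : Type u} [CommRing k]
variable {H : Type u} [Ring H] [HopfAlgebra k H]
variable {A : Type u} [Ring A] [Algebra k A]

/-- The coaction `ρ` is coassociative and counital. -/
def IsCoaction (ρ : A →ₗ[k] A ⊗[k] H) : Prop :=
  (∀ a, ρ.rTensor H (ρ a) =
      (TensorProduct.assoc k A H H).symm ((Coalgebra.comul (R := k) (A := H)).lTensor A (ρ a))) ∧
  (∀ a, (TensorProduct.rid k A) ((Coalgebra.counit (R := k) (A := H)).lTensor A (ρ a)) = a)

/-- The coinvariant subalgebra `B = A^{co H}` of a comodule algebra. -/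
def coinv (ρ : A →ₐ[k] A ⊗[k] H) : Subalgebra k A where
  carrier := {a | ρ a = a ⊗ₜ[k] (1 : H)}
  one_mem' := by
    show ρ 1 = (1 : A) ⊗ₜ[k] (1 : H)
    rw [map_one, Algebra.TensorProduct.one_def]
  mul_mem' := by
    intro a b ha hb
    show ρ (a * b) = (a * b) ⊗ₜ[k] (1 : H)
    rw [map_mul, ha, hb, Algebra.TensorProduct.tmul_mul_tmul, one_mul]
  add_mem' := by
    intro a b ha hb
    show ρ (a + b) = (a + b) ⊗ₜ[k] (1 : H)
    rw [map_add, ha, hb, TensorProduct.add_tmul]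
  zero_mem' := by
    show ρ 0 = (0 : A) ⊗ₜ[k] (1 : H)
    rw [map_zero, TensorProduct.zero_tmul]
  algebraMap_mem' := by
    intro r
    show ρ (algebraMap k A r) = (algebraMap k A r) ⊗ₜ[k] (1 : H)
    rw [AlgHom.commutes, Algebra.TensorProduct.algebraMap_apply]

/-- Convolution product on `Hom(H, A)`. -/
def conv (f g : H →ₗ[k] A) : H →ₗ[k] A :=
  (LinearMap.mul' k A) ∘ₗ (TensorProduct.map f g) ∘ₗ Coalgebra.comul

/-- Opposite convolution product `(f ⋆ g)(h) = f(h₍₂₎) g(h₍₁₎)`. -/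
def convOp (f g : H →ₗ[k] A) : H →ₗ[k] A :=
  (LinearMap.mul' k A) ∘ₗ (TensorProduct.map f g) ∘ₗ
    (TensorProduct.comm k H H).toLinearMap ∘ₗ Coalgebra.comul

/-- The rearranged iterated comultiplication `h ↦ h₍₂₎ ⊗ (h₍₁₎ ⊗ h₍₃₎)`. -/
def sweedler213 : H →ₗ[k] H ⊗[k] (H ⊗[k] H) :=
  (TensorProduct.assoc k H H H).toLinearMap
    ∘ₗ (((TensorProduct.comm k H H).toLinearMap).rTensor H)
    ∘ₗ (TensorProduct.assoc k H H H).symm.toLinearMap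
    ∘ₗ ((Coalgebra.comul (R := k) (A := H)).lTensor H) ∘ₗ Coalgebra.comul

/-- `v ∈ C_A(1,1) = Hom(H, B)`, i.e. `ρ(v(h)) = v(h) ⊗ 1`. -/
def memC11 (ρ : A →ₗ[k] A ⊗[k] H) (v : H →ₗ[k] A) : Prop :=
  ∀ h, ρ (v h) = v h ⊗ₜ[k] (1 : H)

/-- `t ∈ C_A(2,1) = Hom^H(H, A)`, i.e. `ρ(t(h)) = t(h₍₁₎) ⊗ h₍₂₎`. -/
def memC21 (ρ : A →ₗ[k] A ⊗[k] H) (t : H →ₗ[k] A) : Prop :=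
  ∀ h, ρ (t h) = TensorProduct.map t LinearMap.id (Coalgebra.comul h)

/-- `u ∈ C_A(1,2)`, i.e. `ρ(u(h)) = u(h₍₂₎) ⊗ S(h₍₁₎)`. -/
def memC12 (ρ : A →ₗ[k] A ⊗[k] H) (u : H →ₗ[k] A) : Prop :=
  ∀ h, ρ (u h) =
    TensorProduct.map u (HopfAlgebra.antipode (R := k))
      ((TensorProduct.comm k H H) (Coalgebra.comul h))

/-- `w ∈ C_A(2,2)`, i.e. `ρ(w(h)) = w(h₍₂₎) ⊗ S(h₍₁₎) h₍₃₎`. -/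
def memC22 (ρ : A →ₗ[k] A ⊗[k] H) (w : H →ₗ[k] A) : Prop :=
  ∀ h, ρ (w h) =
    TensorProduct.map w
      ((LinearMap.mul' k H) ∘ₗ TensorProduct.map (HopfAlgebra.antipode (R := k)) LinearMap.id)
      (sweedler213 h)

/-- `u' ∈ C'_A(2,1)`, i.e. `ρ(u'(h)) = u'(h₍₂₎) ⊗ S̄(h₍₁₎)`. -/
def memC'21 (ρ : A →ₗ[k] A ⊗[k] H) (Sbar : H →ₗ[k] H) (u' : H →ₗ[k] A) : Prop :=
  ∀ h, ρ (u' h) =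
    TensorProduct.map u' Sbar ((TensorProduct.comm k H H) (Coalgebra.comul h))

/-- `w' ∈ C'_A(2,2)`, i.e. `ρ(w'(h)) = w'(h₍₂₎) ⊗ h₍₃₎ S̄(h₍₁₎)`. -/
def memC'22 (ρ : A →ₗ[k] A ⊗[k] H) (Sbar : H →ₗ[k] H) (w' : H →ₗ[k] A) : Prop :=
  ∀ h, ρ (w' h) =
    TensorProduct.map w'
      ((LinearMap.mul' k H) ∘ₗ (TensorProduct.map LinearMap.id Sbar) ∘ₗ
        (TensorProduct.comm k H H).toLinearMap)
      (sweedler213 h)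

end


noncomputable section
universe u
set_option maxHeartbeats 1000000


variable {k : Type u} [CommRing k]

section cvSection
variable {C : Type*} [AddCommGroup C] [Module k C] [Coalgebra k C]
variable {A : Type*} [Ring A] [Algebra k A]

def cvv (f g : C →ₗ[k] A) : C →ₗ[k] A :=
  (LinearMap.mul' k A) ∘ₗ (TensorProduct.map f g) ∘ₗ Coalgebra.comul

def eeA : C →ₗ[k] A := Algebra.linearMap k A ∘ₗ Coalgebra.counit

lemma cvv_apply (f g : C →ₗ[k] A) (c : C) {ι : Type*} (r : Coalgebra.Repr k c ι) :
    cvv f g c = ∑ i ∈ r.index, f (r.left i) * g (r.right i) := by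
  simp only [cvv, LinearMap.comp_apply, ← r.eq, map_sum, TensorProduct.map_tmul,
    LinearMap.mul'_apply]

lemma eeA_apply (c : C) : eeA (k := k) (A := A) c = Coalgebra.counit (R := k) c • 1 := by
  simp [eeA, Algebra.algebraMap_eq_smul_one]

lemma cvv_assoc (f g s : C →ₗ[k] A) : cvv (cvv f g) s = cvv f (cvv g s) := by
  ext a
  set r := ℛ k a with hr
  set a₁ : ∀ i : C × C, Coalgebra.Repr k (r.left i) (C × C) := fun i => ℛ k (r.left i) with ha₁
  set a₂ : ∀ i : C × C, Coalgebra.Repr k (r.right i) (C × C) := fun i => ℛ k (r.right i) with ha₂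
  have key := Coalgebra.sum_tmul_tmul_eq r a₁ a₂
  have key2 := congrArg (LinearMap.mul' k A ∘ₗ (LinearMap.mul' k A).lTensor A ∘ₗ
      TensorProduct.map f (TensorProduct.map g s)) key
  simp only [map_sum, LinearMap.comp_apply, TensorProduct.map_tmul, LinearMap.lTensor_tmul,
    LinearMap.mul'_apply] at key2
  calc cvv (cvv f g) s a = ∑ i ∈ r.index, cvv f g (r.left i) * s (r.right i) :=
        cvv_apply _ _ a r
    _ = ∑ i ∈ r.index, (∑ j ∈ (a₁ i).index, f ((a₁ i).left j) * g ((a₁ i).right j))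
          * s (r.right i) := by
        refine Finset.sum_congr rfl fun i _ => ?_
        rw [cvv_apply _ _ _ (a₁ i)]
    _ = ∑ i ∈ r.index, ∑ j ∈ (a₁ i).index,
          f ((a₁ i).left j) * (g ((a₁ i).right j) * s (r.right i)) := by
        simp [Finset.sum_mul, mul_assoc]
    _ = ∑ i ∈ r.index, ∑ j ∈ (a₂ i).index,
          f (r.left i) * (g ((a₂ i).left j) * s ((a₂ i).right j)) := key2
    _ = ∑ i ∈ r.index, f (r.left i) * cvv g s (r.right i) := by
        refine Finset.sum_congr rfl fun i _ => ?_
        rw [cvv_apply _ _ _ (a₂ i), Finset.mul_sum]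
    _ = cvv f (cvv g s) a := (cvv_apply _ _ a r).symm

lemma cvv_ee_right (f : C →ₗ[k] A) : cvv f eeA = f := by
  ext a
  have h0 := congrArg (TensorProduct.rid k C) (Coalgebra.sum_tmul_counit_eq (R := k) (ℛ k a))
  simp only [map_sum, TensorProduct.rid_tmul, one_smul] at h0
  rw [cvv_apply _ _ a (ℛ k a)]
  calc ∑ i ∈ (ℛ k a).index, f ((ℛ k a).left i) * eeA ((ℛ k a).right i)
      = ∑ i ∈ (ℛ k a).index, f (Coalgebra.counit (R := k) ((ℛ k a).right i) • (ℛ k a).left i) := by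
        refine Finset.sum_congr rfl fun i _ => ?_
        rw [eeA_apply, mul_smul_comm, mul_one, map_smul]
    _ = f a := by rw [← map_sum, h0]

lemma cvv_ee_left (f : C →ₗ[k] A) : cvv eeA f = f := by
  ext a
  have h0 := congrArg (TensorProduct.lid k C) (Coalgebra.sum_counit_tmul_eq (R := k) (ℛ k a))
  simp only [map_sum, TensorProduct.lid_tmul, one_smul] at h0
  rw [cvv_apply _ _ a (ℛ k a)]
  calc ∑ i ∈ (ℛ k a).index, eeA ((ℛ k a).left i) * f ((ℛ k a).right i)
      = ∑ i ∈ (ℛ k a).index, f (Coalgebra.counit (R := k) ((ℛ k a).left i) • (ℛ k a).right i) := by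
        refine Finset.sum_congr rfl fun i _ => ?_
        rw [eeA_apply, smul_mul_assoc, one_mul, map_smul]
    _ = f a := by rw [← map_sum, h0]

lemma cvv_inv_unique {f g g' : C →ₗ[k] A} (h1 : cvv g f = eeA) (h2 : cvv f g' = eeA) :
    g = g' := by
  have : cvv g (cvv f g') = cvv (cvv g f) g' := (cvv_assoc g f g').symm
  rwa [h1, h2, cvv_ee_right, cvv_ee_left] at this

lemma cvv_sum_right {ι : Type*} (s : Finset ι) (f : C →ₗ[k] A) (g : ι → (C →ₗ[k] A)) :
    cvv f (∑ j ∈ s, g j) = ∑ j ∈ s, cvv f (g j) := by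
  ext a
  rw [cvv_apply _ _ a (ℛ k a)]
  simp only [LinearMap.sum_apply, LinearMap.coe_sum, Finset.sum_apply]
  simp only [Finset.mul_sum]
  rw [Finset.sum_comm]
  refine Finset.sum_congr rfl fun j _ => ?_
  rw [cvv_apply _ _ a (ℛ k a)]

/-- naturality of convolution under algebra maps -/
lemma cvv_push {A' : Type*} [Ring A'] [Algebra k A'] (φ : A →ₐ[k] A')
    (f g : C →ₗ[k] A) :
    φ.toLinearMap ∘ₗ cvv f g = cvv (φ.toLinearMap ∘ₗ f) (φ.toLinearMap ∘ₗ g) := by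
  ext a
  simp only [LinearMap.comp_apply, AlgHom.toLinearMap_apply]
  rw [cvv_apply f g a (ℛ k a), cvv_apply _ _ a (ℛ k a), map_sum]
  simp

/-- `kap a = (c ↦ ε c • a)` -/
def kap (a : A) : C →ₗ[k] A := LinearMap.toSpanSingleton k A a ∘ₗ Coalgebra.counit

lemma kap_apply (a : A) (c : C) : kap (k := k) (a := a) c = Coalgebra.counit (R := k) c • a := rfl

lemma kap_one : kap (k := k) (C := C) (1 : A) = eeA := by
  ext c; rw [kap_apply, eeA_apply]

lemma kap_sum {ι : Type*} (s : Finset ι) (a : ι → A) :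
    kap (k := k) (C := C) (∑ j ∈ s, a j) = ∑ j ∈ s, kap (a j) := by
  ext c
  simp [kap_apply, Finset.smul_sum]

lemma cvv_kap_right (f : C →ₗ[k] A) (a : A) :
    cvv f (kap a) = LinearMap.mulRight k a ∘ₗ f := by
  ext c
  have h0 := congrArg (TensorProduct.rid k C) (Coalgebra.sum_tmul_counit_eq (R := k) (ℛ k c))
  simp only [map_sum, TensorProduct.rid_tmul, one_smul] at h0
  rw [cvv_apply _ _ c (ℛ k c)]
  simp only [LinearMap.comp_apply, LinearMap.mulRight_apply]
  calc ∑ i ∈ (ℛ k c).index, f ((ℛ k c).left i) * kap a ((ℛ k c).right i)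
      = ∑ i ∈ (ℛ k c).index,
          f (Coalgebra.counit (R := k) ((ℛ k c).right i) • (ℛ k c).left i) * a := by
        refine Finset.sum_congr rfl fun i _ => ?_
        rw [kap_apply, mul_smul_comm, map_smul, smul_mul_assoc]
    _ = f c * a := by rw [← Finset.sum_mul, ← map_sum, h0]

lemma cvv_kap_left (f : C →ₗ[k] A) (a : A) :
    cvv (kap a) f = LinearMap.mulLeft k a ∘ₗ f := by
  ext c
  have h0 := congrArg (TensorProduct.lid k C) (Coalgebra.sum_counit_tmul_eq (R := k) (ℛ k c))
  simp only [map_sum, TensorProduct.lid_tmul, one_smul] at h0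
  rw [cvv_apply _ _ c (ℛ k c)]
  simp only [LinearMap.comp_apply, LinearMap.mulLeft_apply]
  calc ∑ i ∈ (ℛ k c).index, kap a ((ℛ k c).left i) * f ((ℛ k c).right i)
      = ∑ i ∈ (ℛ k c).index,
          a * f (Coalgebra.counit (R := k) ((ℛ k c).left i) • (ℛ k c).right i) := by
        refine Finset.sum_congr rfl fun i _ => ?_
        rw [kap_apply, smul_mul_assoc, map_smul, mul_smul_comm]
    _ = a * f c := by rw [← Finset.mul_sum, ← map_sum, h0]

lemma cvv_kap_kap (a b : A) :
    cvv (kap (k := k) (C := C) a) (kap b) = kap (a * b) := by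
  rw [cvv_kap_right]
  ext c
  simp [kap_apply, LinearMap.mulRight_apply, smul_mul_assoc]

lemma cvv_sum_left {ι : Type*} (s : Finset ι) (f : ι → (C →ₗ[k] A)) (g : C →ₗ[k] A) :
    cvv (∑ j ∈ s, f j) g = ∑ j ∈ s, cvv (f j) g := by
  ext a
  rw [cvv_apply _ _ a (ℛ k a)]
  simp only [LinearMap.sum_apply, LinearMap.coe_sum, Finset.sum_apply]
  simp only [Finset.sum_mul]
  rw [Finset.sum_comm]
  refine Finset.sum_congr rfl fun j _ => ?_
  rw [cvv_apply _ _ a (ℛ k a)]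

lemma cvv_kap_right_apply (f : C →ₗ[k] A) (a : A) (c : C) :
    cvv f (kap a) c = f c * a := by
  rw [cvv_kap_right]; rfl

lemma cvv_kap_left_apply (f : C →ₗ[k] A) (a : A) (c : C) :
    cvv (kap a) f c = a * f c := by
  rw [cvv_kap_left]; rfl

end cvSection


section bialg
variable {H : Type u} [Ring H] [Bialgebra k H]

/-- representation of a product from representations of the factors -/
def reprMul {x y : H} {ι κ : Type*} (rx : Coalgebra.Repr k x ι) (ry : Coalgebra.Repr k y κ) :
    Coalgebra.Repr k (x * y) (ι × κ) where
  index := rx.index ×ˢ ry.index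
  left := fun p => rx.left p.1 * ry.left p.2
  right := fun p => rx.right p.1 * ry.right p.2
  eq := by
    rw [CoalgebraStruct.comul, ← Coalgebra.comul]
    rw [Bialgebra.comul_mul, ← rx.eq, ← ry.eq, Finset.sum_mul_sum]
    rw [Finset.sum_product]
    simp [Algebra.TensorProduct.tmul_mul_tmul]

/-- representation of `1` -/
def reprOne : Coalgebra.Repr k (1 : H) PUnit.{u+1} where
  index := (Finset.univ : Finset PUnit.{u+1})
  left := fun _ => 1
  right := fun _ => 1
  eq := by
    rw [CoalgebraStruct.comul, ← Coalgebra.comul]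
    simp [Algebra.TensorProduct.one_def]

/-- swapped representation, using cocommutativity -/
def reprSwap (hcoc : ∀ h : H, (TensorProduct.comm k H H) (Coalgebra.comul (R := k) h) =
      Coalgebra.comul (R := k) h) {h : H} {ι : Type*} (r : Coalgebra.Repr k h ι) :
    Coalgebra.Repr k h ι where
  index := r.index
  left := r.right
  right := r.left
  eq := by
    have := congrArg (TensorProduct.comm k H H) r.eq
    simp only [map_sum, TensorProduct.comm_tmul] at this
    rw [CoalgebraStruct.comul, ← Coalgebra.comul]
    rw [this, hcoc]

end bialg

section hopf
variable {H : Type u} [Ring H] [HopfAlgebra k H]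

/-- representation of a pure tensor in the tensor-product coalgebra `H ⊗ H` -/
def reprTmul (x y : H) {ι κ : Type*} (rx : Coalgebra.Repr k x ι) (ry : Coalgebra.Repr k y κ) :
    Coalgebra.Repr k (x ⊗ₜ[k] y : H ⊗[k] H) (ι × κ) where
  index := rx.index ×ˢ ry.index
  left := fun p => rx.left p.1 ⊗ₜ[k] ry.left p.2
  right := fun p => rx.right p.1 ⊗ₜ[k] ry.right p.2
  eq := by
    have : CoalgebraStruct.comul (R := k) (x ⊗ₜ[k] y) =
        TensorProduct.tensorTensorTensorComm k H H H H
          (TensorProduct.map Coalgebra.comul Coalgebra.comul (x ⊗ₜ[k] y)) := rfl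
    rw [this, TensorProduct.map_tmul, ← rx.eq, ← ry.eq]
    rw [TensorProduct.sum_tmul]
    simp only [TensorProduct.tmul_sum, map_sum, TensorProduct.tensorTensorTensorComm_tmul]
    rw [Finset.sum_product]

lemma counit_tmul (x y : H) :
    Coalgebra.counit (R := k) (x ⊗ₜ[k] y : H ⊗[k] H) =
      Coalgebra.counit (R := k) x * Coalgebra.counit (R := k) y := by
  rw [TensorProduct.counit_tmul, smul_eq_mul, mul_comm]

end hopf

section hopf2
variable {H : Type u} [Ring H] [HopfAlgebra k H]

local notation "S" => HopfAlgebra.antipode (R := k) (A := H)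

lemma antipode_one' : (S) (1 : H) = 1 := by
  have := HopfAlgebra.sum_mul_antipode_eq_smul (R := k) (reprOne (k := k) (H := H))
  simpa [reprOne] using this

lemma antipode_mul' (x y : H) : (S) (x * y) = (S) y * (S) x := by
  classical
  set F₁ : H ⊗[k] H →ₗ[k] H := (S) ∘ₗ LinearMap.mul' k H with hF₁
  set F₂ : H ⊗[k] H →ₗ[k] H :=
    LinearMap.mul' k H ∘ₗ TensorProduct.map (S) (S) ∘ₗ (TensorProduct.comm k H H).toLinearMap
    with hF₂
  set M : H ⊗[k] H →ₗ[k] H := LinearMap.mul' k H with hM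
  have h1 : cvv F₁ M = eeA := by
    apply TensorProduct.ext'
    intro x y
    rw [cvv_apply _ _ _ (reprTmul x y (ℛ k x) (ℛ k y))]
    have : ∑ p ∈ (reprTmul x y (ℛ k x) (ℛ k y)).index,
        F₁ ((reprTmul x y (ℛ k x) (ℛ k y)).left p) * M ((reprTmul x y (ℛ k x) (ℛ k y)).right p)
        = ∑ p ∈ (reprMul (ℛ k x) (ℛ k y)).index,
            (S) ((reprMul (ℛ k x) (ℛ k y)).left p) * (reprMul (ℛ k x) (ℛ k y)).right p := by
      refine Finset.sum_congr rfl fun p _ => ?_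
      simp [reprTmul, reprMul, hF₁, hM, LinearMap.mul'_apply]
    rw [this, HopfAlgebra.sum_antipode_mul_eq_smul]
    rw [eeA_apply, _root_.counit_tmul, Bialgebra.counit_mul]
  have h2 : cvv M F₂ = eeA := by
    apply TensorProduct.ext'
    intro x y
    rw [cvv_apply _ _ _ (reprTmul x y (ℛ k x) (ℛ k y))]
    have hy := HopfAlgebra.sum_mul_antipode_eq_smul (R := k) (ℛ k y)
    have hx := HopfAlgebra.sum_mul_antipode_eq_smul (R := k) (ℛ k x)
    calc ∑ p ∈ (ℛ k x).index ×ˢ (ℛ k y).index,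
          M ((reprTmul x y (ℛ k x) (ℛ k y)).left p) * F₂ ((reprTmul x y (ℛ k x) (ℛ k y)).right p)
        = ∑ i ∈ (ℛ k x).index, ∑ j ∈ (ℛ k y).index,
            (ℛ k x).left i * (((ℛ k y).left j * (S) ((ℛ k y).right j)) * (S) ((ℛ k x).right i))
          := by
            rw [Finset.sum_product]
            refine Finset.sum_congr rfl fun i _ => Finset.sum_congr rfl fun j _ => ?_
            simp only [reprTmul, hM, hF₂, LinearMap.comp_apply, LinearEquiv.coe_coe,
              TensorProduct.comm_tmul, TensorProduct.map_tmul, LinearMap.mul'_apply]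
            simp only [mul_assoc]
      _ = ∑ i ∈ (ℛ k x).index,
            (ℛ k x).left i * ((Coalgebra.counit (R := k) y • (1:H)) * (S) ((ℛ k x).right i)) := by
            refine Finset.sum_congr rfl fun i _ => ?_
            rw [← hy, Finset.sum_mul, Finset.mul_sum]
      _ = Coalgebra.counit (R := k) y • ∑ i ∈ (ℛ k x).index,
            (ℛ k x).left i * (S) ((ℛ k x).right i) := by
            rw [Finset.smul_sum]
            refine Finset.sum_congr rfl fun i _ => ?_
            rw [smul_mul_assoc, one_mul, mul_smul_comm]
      _ = eeA (x ⊗ₜ[k] y) := by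
            rw [hx, eeA_apply, _root_.counit_tmul, smul_smul, mul_comm]
  have h12 : F₁ = F₂ := cvv_inv_unique h1 h2
  have := congrArg (fun (f : H ⊗[k] H →ₗ[k] H) => f (x ⊗ₜ[k] y)) h12
  simpa [hF₁, hF₂, hM, LinearMap.mul'_apply] using this

end hopf2


section bialgA
variable {H : Type u} [Ring H] [Bialgebra k H]
variable {A : Type*} [Ring A] [Algebra k A]

lemma cvv_mulRight (f g : H →ₗ[k] A) (h' : H) {ι : Type*} (r' : Coalgebra.Repr k h' ι) :
    cvv f g ∘ₗ LinearMap.mulRight k h' =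
      ∑ j ∈ r'.index,
        cvv (f ∘ₗ LinearMap.mulRight k (r'.left j)) (g ∘ₗ LinearMap.mulRight k (r'.right j)) := by
  ext x
  simp only [LinearMap.comp_apply, LinearMap.mulRight_apply, LinearMap.coe_sum,
    Finset.sum_apply]
  rw [cvv_apply _ _ _ (reprMul (ℛ k x) r')]
  have : ∑ p ∈ (reprMul (ℛ k x) r').index,
      f ((reprMul (ℛ k x) r').left p) * g ((reprMul (ℛ k x) r').right p)
      = ∑ i ∈ (ℛ k x).index, ∑ j ∈ r'.index,
          f ((ℛ k x).left i * r'.left j) * g ((ℛ k x).right i * r'.right j) := by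
    simp only [reprMul]
    rw [Finset.sum_product]
  rw [this, Finset.sum_comm]
  refine Finset.sum_congr rfl fun j _ => ?_
  rw [cvv_apply _ _ x (ℛ k x)]
  rfl

lemma cvv_swap (hcoc : ∀ h : H, (TensorProduct.comm k H H) (Coalgebra.comul (R := k) h) =
      Coalgebra.comul (R := k) h)
    (f g : H →ₗ[k] A) (hfg : ∀ x y, f x * g y = g y * f x) : cvv f g = cvv g f := by
  ext h
  rw [cvv_apply f g h (reprSwap hcoc (ℛ k h)), cvv_apply g f h (ℛ k h)]
  exact Finset.sum_congr rfl fun i _ => hfg ((ℛ k h).right i) ((ℛ k h).left i)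

end bialgA

section hopfA
variable {H : Type u} [Ring H] [HopfAlgebra k H]
variable {A : Type*} [Ring A] [Algebra k A]

local notation "S" => HopfAlgebra.antipode (R := k) (A := H)

variable {t : H →ₗ[k] A} (h1 : t 1 = 1) (hm : ∀ x y : H, t (x * y) = t x * t y)

include h1 hm in
lemma cvv_t_tS : cvv t (t ∘ₗ S) = eeA := by
  ext h
  rw [cvv_apply _ _ h (ℛ k h), eeA_apply]
  calc ∑ i ∈ (ℛ k h).index, t ((ℛ k h).left i) * (t ∘ₗ S) ((ℛ k h).right i)
      = t (∑ i ∈ (ℛ k h).index, (ℛ k h).left i * (S) ((ℛ k h).right i)) := by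
        rw [map_sum]; exact Finset.sum_congr rfl fun i _ => (hm _ _).symm
    _ = Coalgebra.counit (R := k) h • (1 : A) := by
        rw [HopfAlgebra.sum_mul_antipode_eq_smul, map_smul, h1]

include h1 hm in
lemma cvv_tS_t : cvv (t ∘ₗ S) t = eeA := by
  ext h
  rw [cvv_apply _ _ h (ℛ k h), eeA_apply]
  calc ∑ i ∈ (ℛ k h).index, (t ∘ₗ S) ((ℛ k h).left i) * t ((ℛ k h).right i)
      = t (∑ i ∈ (ℛ k h).index, (S) ((ℛ k h).left i) * (ℛ k h).right i) := by
        rw [map_sum]; exact Finset.sum_congr rfl fun i _ => (hm _ _).symm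
    _ = Coalgebra.counit (R := k) h • (1 : A) := by
        rw [HopfAlgebra.sum_antipode_mul_eq_smul, map_smul, h1]

include hm in
lemma t_comp_mulRight (h' : H) :
    t ∘ₗ LinearMap.mulRight k h' = cvv t (kap (t h')) := by
  rw [cvv_kap_right]
  ext x
  simp [hm]

include hm in
lemma tS_comp_mulRight (h' : H) :
    (t ∘ₗ S) ∘ₗ LinearMap.mulRight k h' = cvv (kap (t ((S) h'))) (t ∘ₗ S) := by
  rw [cvv_kap_left]
  ext x
  simp only [LinearMap.comp_apply, LinearMap.mulRight_apply, LinearMap.mulLeft_apply]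
  rw [antipode_mul', hm]

/-- colinear map built from `g` -/
def clmap (g : H →ₗ[k] A) : H →ₗ[k] A ⊗[k] H :=
  (TensorProduct.map g LinearMap.id) ∘ₗ Coalgebra.comul

lemma cvv_includeLeft_clmap (f g : H →ₗ[k] A) :
    cvv ((Algebra.TensorProduct.includeLeft : A →ₐ[k] A ⊗[k] H).toLinearMap ∘ₗ f) (clmap g) =
      clmap (cvv f g) := by
  ext h
  set r := ℛ k h with hrdef
  set a₁ : ∀ i : H × H, Coalgebra.Repr k (r.left i) (H × H) := fun i => ℛ k (r.left i) with ha₁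
  set a₂ : ∀ i : H × H, Coalgebra.Repr k (r.right i) (H × H) := fun i => ℛ k (r.right i) with ha₂
  have key := congrArg (LinearMap.rTensor H (LinearMap.mul' k A) ∘ₗ
      (TensorProduct.assoc k A A H).symm.toLinearMap ∘ₗ
      TensorProduct.map f (TensorProduct.map g LinearMap.id))
    (Coalgebra.sum_tmul_tmul_eq r a₁ a₂)
  simp only [map_sum, LinearMap.comp_apply, TensorProduct.map_tmul, LinearMap.id_coe, id_eq,
    TensorProduct.assoc_symm_tmul, LinearEquiv.coe_coe, LinearMap.rTensor_tmul,
    LinearMap.mul'_apply] at key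
  calc cvv ((Algebra.TensorProduct.includeLeft : A →ₐ[k] A ⊗[k] H).toLinearMap ∘ₗ f) (clmap g) h
      = ∑ i ∈ r.index, (f (r.left i) ⊗ₜ[k] (1 : H)) * (clmap g (r.right i)) :=
        cvv_apply _ _ h r
    _ = ∑ i ∈ r.index, ∑ j ∈ (a₂ i).index,
          (f (r.left i) * g ((a₂ i).left j)) ⊗ₜ[k] (a₂ i).right j := by
        refine Finset.sum_congr rfl fun i _ => ?_
        rw [clmap, LinearMap.comp_apply, ← (a₂ i).eq, map_sum, Finset.mul_sum]
        refine Finset.sum_congr rfl fun j _ => ?_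
        simp [Algebra.TensorProduct.tmul_mul_tmul]
    _ = ∑ i ∈ r.index, ∑ j ∈ (a₁ i).index,
          (f ((a₁ i).left j) * g ((a₁ i).right j)) ⊗ₜ[k] r.right i := key.symm
    _ = clmap (cvv f g) h := by
        rw [clmap, LinearMap.comp_apply, ← r.eq, map_sum]
        refine Finset.sum_congr rfl fun i _ => ?_
        rw [TensorProduct.map_tmul, cvv_apply _ _ _ (a₁ i), TensorProduct.sum_tmul]
        rfl

end hopfA



end



set_option maxHeartbeats 1000000
noncomputable section

variable {k H A : Type u} [CommRing k] [Ring H] [HopfAlgebra k H] [Ring A] [Algebra k A]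

/-- the unit `η_B ∘ ε` for the convolution algebra `Hom(H, B)` -/
def unitB (ρ : A →ₐ[k] A ⊗[k] H) : H →ₗ[k] coinv ρ :=
  Algebra.linearMap k (coinv ρ) ∘ₗ Coalgebra.counit

/-- convolution on `Hom(H, B)` -/
def convB {ρ : A →ₐ[k] A ⊗[k] H} (v v₁ : H →ₗ[k] coinv ρ) : H →ₗ[k] coinv ρ :=
  (LinearMap.mul' k (coinv ρ)) ∘ₗ (TensorProduct.map v v₁) ∘ₗ Coalgebra.comul

/-- `v ∈ Z¹(H, B)`: `v` is convolution invertible and satisfies the Sweedler 1-cocycle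
condition `v(hk) = (h₍₁₎ · v(k)) v(h₍₂₎)`. -/
def IsZ1 (ρ : A →ₐ[k] A ⊗[k] H) (act : H →ₗ[k] (coinv ρ) →ₗ[k] (coinv ρ))
    (v : H →ₗ[k] coinv ρ) : Prop :=
  (∃ v' : H →ₗ[k] coinv ρ, convB v v' = unitB ρ ∧ convB v' v = unitB ρ) ∧
  ∀ (h h' : H) (ι : Type u) (r : Coalgebra.Repr k h ι),
    v (h * h') = ∑ i ∈ r.index, act (r.left i) (v h') * v (r.right i)

/-- `t ∈ Ω_A`: `t` is an `H`-colinear algebra map `H → A`. -/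
def IsOmega (ρ : A →ₐ[k] A ⊗[k] H) (t : H →ₗ[k] A) : Prop :=
  memC21 ρ.toLinearMap t ∧ t 1 = 1 ∧ ∀ h h' : H, t (h * h') = t h * t h'

/-- `w ∈ X_A(2,2)`: `w ∈ Hom(H, B)` with `w ∘ S ∈ Z¹(H, B)`. -/
def IsX22 (ρ : A →ₐ[k] A ⊗[k] H) (act : H →ₗ[k] (coinv ρ) →ₗ[k] (coinv ρ))
    (w : H →ₗ[k] coinv ρ) : Prop :=
  IsZ1 ρ act (w ∘ₗ HopfAlgebra.antipode (R := k))


/-- `v ∼ v₁` in `Z¹(H,B)`: `v = f_b ∗ v₁` for an invertible `b ∈ B`,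
where `f_b(h) = (h · b) b⁻¹`. -/
def EquivZ1 {ρ : A →ₐ[k] A ⊗[k] H} (act : H →ₗ[k] (coinv ρ) →ₗ[k] (coinv ρ))
    (v v₁ : H →ₗ[k] coinv ρ) : Prop :=
  ∃ b binv : coinv ρ, b * binv = 1 ∧ binv * b = 1 ∧
    ∀ (h : H) (ι : Type u) (r : Coalgebra.Repr k h ι),
      v h = ∑ i ∈ r.index, act (r.left i) b * binv * v₁ (r.right i)

/-- `t ∼ t₂` in `Ω_A`: there is an invertible `b ∈ B` with `b t(h) = t₂(h) b` for all `h`. -/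
def EquivOmega {ρ : A →ₐ[k] A ⊗[k] H} (t t₂ : H →ₗ[k] A) : Prop :=
  ∃ b binv : coinv ρ, b * binv = 1 ∧ binv * b = 1 ∧
    ∀ h : H, (b : A) * t h = t₂ h * (b : A)

/-- Proposition 5.7: let `H` be a cocommutative Hopf algebra, `A` a cleft
right `H`-comodule algebra with commutative `B = A^{co H}`, `Ω_A ≠ ∅` and `t₀ ∈ Ω_A` fixed,
`u₀ = t₀ ∘ S`.  The bijection `F : Z¹(H,B) → Ω_A`, `F(v) = v ∗ t₀` (inverse `t ↦ t ∗ u₀`),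
sends cohomologous cocycles to equivalent elements of `Ω_A` and conversely; hence it induces
a bijection `H¹(H,B) → Ω̄_A`. -/
theorem stmt14_H1_classifies_Omega
    (hcoc : ∀ h : H, (TensorProduct.comm k H H) (Coalgebra.comul (R := k) h) =
      Coalgebra.comul (R := k) h)
    (ρ : A →ₐ[k] A ⊗[k] H) (hρ : IsCoaction ρ.toLinearMap)
    (hBcomm : ∀ b b' : coinv ρ, b * b' = b' * b)
    (t₀ : H →ₗ[k] A) (ht₀ : IsOmega ρ t₀)
    (act : H →ₗ[k] (coinv ρ) →ₗ[k] (coinv ρ))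
    (hact : ∀ (h : H) (b : coinv ρ) (ι : Type u) (r : Coalgebra.Repr k h ι),
      ((act h b : A)) =
        ∑ i ∈ r.index, t₀ (r.left i) * (b : A) *
          (t₀ ∘ₗ HopfAlgebra.antipode (R := k)) (r.right i)) :
    -- `F(v) = v ∗ t₀` maps `Z¹(H,B)` into `Ω_A` …
    (∀ v : H →ₗ[k] coinv ρ, IsZ1 ρ act v →
      IsOmega ρ (conv ((coinv ρ).val.toLinearMap ∘ₗ v) t₀)) ∧
    -- … is injective …
    (∀ v v₁ : H →ₗ[k] coinv ρ, IsZ1 ρ act v → IsZ1 ρ act v₁ →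
      conv ((coinv ρ).val.toLinearMap ∘ₗ v) t₀ =
        conv ((coinv ρ).val.toLinearMap ∘ₗ v₁) t₀ → v = v₁) ∧
    -- … and surjective, with inverse `F⁻¹(t) = t ∗ u₀`
    (∀ t : H →ₗ[k] A, IsOmega ρ t →
      ∃ v : H →ₗ[k] coinv ρ, IsZ1 ρ act v ∧
        conv ((coinv ρ).val.toLinearMap ∘ₗ v) t₀ = t ∧
        (coinv ρ).val.toLinearMap ∘ₗ v =
          conv t (t₀ ∘ₗ HopfAlgebra.antipode (R := k))) ∧
    -- `F` sends cohomologous cocycles to equivalent elements of `Ω_A`, and conversely;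
    -- hence `F` induces a bijection `H¹(H,B) → Ω̄_A`
    (∀ v v₁ : H →ₗ[k] coinv ρ, IsZ1 ρ act v → IsZ1 ρ act v₁ →
      (EquivZ1 act v v₁ ↔
        EquivOmega (ρ := ρ) (conv ((coinv ρ).val.toLinearMap ∘ₗ v) t₀)
          (conv ((coinv ρ).val.toLinearMap ∘ₗ v₁) t₀))) := by
  classical
  obtain ⟨ht₀c, ht₀1, ht₀m⟩ := ht₀
  have hcv : ∀ f g : H →ₗ[k] A, conv f g = cvv f g := fun _ _ => rfl
  have hcvB : ∀ w w' : H →ₗ[k] coinv ρ, convB w w' = cvv w w' := fun _ _ => rfl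
  set u₀ : H →ₗ[k] A := t₀ ∘ₗ HopfAlgebra.antipode (R := k) with hu₀
  set valL : coinv ρ →ₗ[k] A := (coinv ρ).val.toLinearMap with hvalL
  have hvalinj : Function.Injective valL := Subtype.val_injective
  have hU : cvv t₀ u₀ = eeA := cvv_t_tS ht₀1 ht₀m
  have hU' : cvv u₀ t₀ = eeA := cvv_tS_t ht₀1 ht₀m
  have ht₀cl : ρ.toLinearMap ∘ₗ t₀ = clmap t₀ := LinearMap.ext ht₀c
  have hmemρ : ∀ {a : A}, a ∈ coinv ρ → ρ a = a ⊗ₜ[k] (1 : H) := fun ha => ha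
  have hmemρ' : ∀ {a : A}, ρ a = a ⊗ₜ[k] (1 : H) → a ∈ coinv ρ := fun h => h
  have hcommA : ∀ {a b : A}, a ∈ coinv ρ → b ∈ coinv ρ → a * b = b * a := by
    intro a b ha hb
    simpa using congrArg Subtype.val (hBcomm ⟨a, ha⟩ ⟨b, hb⟩)
  have hswap : ∀ (F G : H →ₗ[k] A), (∀ x, F x ∈ coinv ρ) → (∀ y, G y ∈ coinv ρ) →
      cvv F G = cvv G F := fun F G hF hG => cvv_swap hcoc F G fun x y => hcommA (hF x) (hG y)
  set actL : coinv ρ → (H →ₗ[k] A) := fun b => valL ∘ₗ (LinearMap.flip act) b with hactLdef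
  have hactLapp : ∀ (b : coinv ρ) (x : H), actL b x = (act x b : A) := fun b x => rfl
  have hactLmem : ∀ (b : coinv ρ) (x : H), actL b x ∈ coinv ρ := fun b x => (act x b).2
  have hkapmem : ∀ (a : A), a ∈ coinv ρ → ∀ (x : H), kap (k := k) (C := H) a x ∈ coinv ρ := by
    intro a ha x
    rw [kap_apply]
    exact Subalgebra.smul_mem _ ha _
  have hvmem : ∀ (w : H →ₗ[k] coinv ρ) (x : H), (valL ∘ₗ w) x ∈ coinv ρ := fun w x => (w x).2
  have hactL : ∀ b : coinv ρ, actL b = cvv (cvv t₀ (kap (b : A))) u₀ := by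
    intro b
    ext h
    rw [hactLapp, hact h b _ (ℛ k h), cvv_apply _ _ h (ℛ k h)]
    refine Finset.sum_congr rfl fun i _ => ?_
    rw [cvv_kap_right_apply]
  have hP1 : ∀ (f g X : H →ₗ[k] A), cvv f g = eeA → cvv f (cvv g X) = X := by
    intro f g X hfg
    rw [← cvv_assoc, hfg, cvv_ee_left]
  have hkey1 : ∀ (b : coinv ρ) (c : A),
      cvv (actL b) (cvv t₀ (kap c)) = cvv t₀ (kap ((b : A) * c)) := by
    intro b c
    have e1 : cvv u₀ (cvv t₀ (kap c)) = kap c := hP1 u₀ t₀ (kap c) hU'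
    rw [hactL b, cvv_assoc, e1, cvv_assoc, cvv_kap_kap]
  have hkey2 : ∀ b : coinv ρ, cvv t₀ (kap (b : A)) = cvv (actL b) t₀ := by
    intro b
    rw [hactL b, cvv_assoc, hU', cvv_ee_right]
  have hzmap : ∀ (v : H →ₗ[k] coinv ρ), (∀ (h h' : H) (ι : Type u) (r : Coalgebra.Repr k h ι),
        v (h * h') = ∑ i ∈ r.index, act (r.left i) (v h') * v (r.right i)) →
      ∀ h' : H, (valL ∘ₗ v) ∘ₗ LinearMap.mulRight k h' = cvv (actL (v h')) (valL ∘ₗ v) := by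
    intro v hz h'
    ext h
    simp only [LinearMap.comp_apply, LinearMap.mulRight_apply]
    rw [cvv_apply _ _ h (ℛ k h)]
    have e1 := congrArg (Subtype.val) (hz h h' _ (ℛ k h))
    rw [show valL (v (h * h')) = ((v (h * h') : A)) from rfl, e1]
    rw [AddSubmonoidClass.coe_finset_sum]
    refine Finset.sum_congr rfl fun i _ => ?_
    rw [MulMemClass.coe_mul]
    rfl
  have hu₀1 : u₀ 1 = 1 := by
    rw [hu₀, LinearMap.comp_apply, antipode_one', ht₀1]
  have hact1 : ∀ b : coinv ρ, act 1 b = b := by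
    intro b
    apply hvalinj
    have e0 := hact 1 b _ (reprOne (k := k) (H := H))
    simp only [reprOne, Finset.univ_unique, Finset.sum_singleton] at e0
    rw [show valL (act 1 b) = ((act 1 b : A)) from rfl, e0]
    rw [ht₀1, show (t₀ ∘ₗ HopfAlgebra.antipode (R := k)) (1 : H) = u₀ 1 from rfl, hu₀1]
    rw [one_mul, mul_one]
    rfl
  refine ⟨?_, ?_, ?_, ?_⟩
  -- PART 1
  · intro v hv
    obtain ⟨⟨v', hvv', hv'v⟩, hz⟩ := hv
    have hzm := hzmap v hz
    have hcol : ρ.toLinearMap ∘ₗ cvv (valL ∘ₗ v) t₀ = clmap (cvv (valL ∘ₗ v) t₀) := by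
      rw [cvv_push ρ]
      have e1 : ρ.toLinearMap ∘ₗ (valL ∘ₗ v) =
          (Algebra.TensorProduct.includeLeft : A →ₐ[k] A ⊗[k] H).toLinearMap ∘ₗ (valL ∘ₗ v) := by
        ext h
        simpa [hvalL] using hmemρ (v h).2
      rw [show ρ.toLinearMap ∘ₗ valL ∘ₗ v = ρ.toLinearMap ∘ₗ (valL ∘ₗ v) from rfl, e1, ht₀cl,
        cvv_includeLeft_clmap]
    have hsq : v 1 = v 1 * v 1 := by
      have e0 := hz 1 1 _ (reprOne (k := k) (H := H))
      simp only [reprOne, Finset.univ_unique, Finset.sum_singleton, one_mul] at e0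
      rw [hact1] at e0
      exact e0
    have hinv1 : v 1 * v' 1 = 1 := by
      have e0 := LinearMap.congr_fun hvv' 1
      rw [hcvB, cvv_apply _ _ 1 (reprOne (k := k) (H := H))] at e0
      simp only [reprOne, Finset.univ_unique, Finset.sum_singleton] at e0
      rw [e0]
      show algebraMap k (coinv ρ) (Coalgebra.counit (R := k) (1 : H)) = 1
      rw [Bialgebra.counit_one, map_one]
    have hone : v 1 = 1 := by
      calc v 1 = v 1 * (v 1 * v' 1) := by rw [hinv1, mul_one]
        _ = (v 1 * v 1) * v' 1 := (mul_assoc _ _ _).symm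
        _ = v 1 * v' 1 := by rw [← hsq]
        _ = 1 := hinv1
    refine ⟨?_, ?_, ?_⟩
    · intro h
      rw [hcv]
      exact LinearMap.congr_fun hcol h
    · rw [hcv, cvv_apply _ _ 1 (reprOne (k := k) (H := H))]
      simp only [reprOne, Finset.univ_unique, Finset.sum_singleton, LinearMap.comp_apply]
      rw [show valL (v 1) = ((v 1 : A)) from rfl, hone, ht₀1]
      simp
    · intro h h'
      rw [hcv]
      have hmain : cvv (valL ∘ₗ v) t₀ ∘ₗ LinearMap.mulRight k h'
          = cvv (cvv (valL ∘ₗ v) t₀) (kap (cvv (valL ∘ₗ v) t₀ h')) := by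
        rw [cvv_mulRight _ _ h' (ℛ k h')]
        have perj : ∀ j ∈ (ℛ k h').index,
            cvv ((valL ∘ₗ v) ∘ₗ LinearMap.mulRight k ((ℛ k h').left j))
                (t₀ ∘ₗ LinearMap.mulRight k ((ℛ k h').right j))
            = cvv (valL ∘ₗ v)
                (cvv t₀ (kap ((valL ∘ₗ v) ((ℛ k h').left j) * t₀ ((ℛ k h').right j)))) := by
          intro j _
          rw [hzm, t_comp_mulRight ht₀m,
            hswap (actL (v ((ℛ k h').left j))) (valL ∘ₗ v) (hactLmem _) (hvmem v),
            cvv_assoc, hkey1]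
          rfl
        rw [Finset.sum_congr rfl perj]
        rw [show (∑ j ∈ (ℛ k h').index, cvv (valL ∘ₗ v)
              (cvv t₀ (kap ((valL ∘ₗ v) ((ℛ k h').left j) * t₀ ((ℛ k h').right j)))))
            = cvv (valL ∘ₗ v) (cvv t₀ (kap (∑ j ∈ (ℛ k h').index,
                (valL ∘ₗ v) ((ℛ k h').left j) * t₀ ((ℛ k h').right j)))) from by
            rw [kap_sum, cvv_sum_right, cvv_sum_right]]
        rw [← cvv_apply (valL ∘ₗ v) t₀ h' (ℛ k h'), cvv_assoc]
      have e1 := LinearMap.congr_fun hmain h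
      simp only [LinearMap.comp_apply, LinearMap.mulRight_apply] at e1
      rw [e1, cvv_kap_right_apply]
  -- PART 2
  · intro v v₁ hv hv₁ heq
    rw [hcv, hcv] at heq
    have h2 : cvv (cvv (valL ∘ₗ v) t₀) u₀ = cvv (cvv (valL ∘ₗ v₁) t₀) u₀ := by rw [heq]
    rw [cvv_assoc, cvv_assoc, hU, cvv_ee_right, cvv_ee_right] at h2
    ext h
    exact LinearMap.congr_fun h2 h
  -- PART 3
  · intro t ht
    obtain ⟨htc, ht1, htm⟩ := ht
    have htcl : ρ.toLinearMap ∘ₗ t = clmap t := LinearMap.ext htc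
    set tS : H →ₗ[k] A := t ∘ₗ HopfAlgebra.antipode (R := k) with htSdef
    have hT : cvv t tS = eeA := cvv_t_tS ht1 htm
    have hT' : cvv tS t = eeA := cvv_tS_t ht1 htm
    set vA : H →ₗ[k] A := cvv t u₀ with hvA
    set v'A : H →ₗ[k] A := cvv t₀ tS with hv'A
    have hvAt₀ : cvv vA t₀ = t := by rw [hvA, cvv_assoc, hU', cvv_ee_right]
    have hv'At : cvv v'A t = t₀ := by rw [hv'A, cvv_assoc, hT', cvv_ee_right]
    have cancel : ∀ (X Y Ψ Ψinv : H →ₗ[k] A ⊗[k] H), cvv Ψ Ψinv = eeA →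
        cvv X Ψ = cvv Y Ψ → X = Y := by
      intro X Y Ψ Ψinv hinv hXY
      have e := congrArg (fun Z => cvv Z Ψinv) hXY
      rwa [cvv_assoc, cvv_assoc, hinv, cvv_ee_right, cvv_ee_right] at e
    have hρ1 : ∀ (w : H →ₗ[k] A), w 1 = 1 → (ρ.toLinearMap ∘ₗ w) 1 = 1 := by
      intro w hw
      simp [hw]
    have hρm : ∀ (w : H →ₗ[k] A), (∀ x y : H, w (x * y) = w x * w y) →
        ∀ x y : H, (ρ.toLinearMap ∘ₗ w) (x * y)
          = (ρ.toLinearMap ∘ₗ w) x * (ρ.toLinearMap ∘ₗ w) y := by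
      intro w hw x y
      simp [hw]
    have hΨ : cvv (ρ.toLinearMap ∘ₗ t₀) ((ρ.toLinearMap ∘ₗ t₀) ∘ₗ HopfAlgebra.antipode (R := k))
        = eeA := cvv_t_tS (hρ1 t₀ ht₀1) (hρm t₀ ht₀m)
    have hΨt : cvv (ρ.toLinearMap ∘ₗ t) ((ρ.toLinearMap ∘ₗ t) ∘ₗ HopfAlgebra.antipode (R := k))
        = eeA := cvv_t_tS (hρ1 t ht1) (hρm t htm)
    have hvAmap : ρ.toLinearMap ∘ₗ vA =
        (Algebra.TensorProduct.includeLeft : A →ₐ[k] A ⊗[k] H).toLinearMap ∘ₗ vA := by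
      refine cancel _ _ _ _ hΨ ?_
      have eL : cvv (ρ.toLinearMap ∘ₗ vA) (ρ.toLinearMap ∘ₗ t₀) = clmap t := by
        rw [← cvv_push, hvAt₀, htcl]
      have eR : cvv ((Algebra.TensorProduct.includeLeft : A →ₐ[k] A ⊗[k] H).toLinearMap ∘ₗ vA)
          (ρ.toLinearMap ∘ₗ t₀) = clmap t := by
        rw [ht₀cl, cvv_includeLeft_clmap, hvAt₀]
      rw [eL, eR]
    have hv'Amap : ρ.toLinearMap ∘ₗ v'A =
        (Algebra.TensorProduct.includeLeft : A →ₐ[k] A ⊗[k] H).toLinearMap ∘ₗ v'A := by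
      refine cancel _ _ _ _ hΨt ?_
      have eL : cvv (ρ.toLinearMap ∘ₗ v'A) (ρ.toLinearMap ∘ₗ t) = clmap t₀ := by
        rw [← cvv_push, hv'At, ht₀cl]
      have eR : cvv ((Algebra.TensorProduct.includeLeft : A →ₐ[k] A ⊗[k] H).toLinearMap ∘ₗ v'A)
          (ρ.toLinearMap ∘ₗ t) = clmap t₀ := by
        rw [htcl, cvv_includeLeft_clmap, hv'At]
      rw [eL, eR]
    have hvAmem : ∀ h, vA h ∈ coinv ρ := by
      intro h
      apply hmemρ'
      simpa using LinearMap.congr_fun hvAmap h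
    have hv'Amem : ∀ h, v'A h ∈ coinv ρ := by
      intro h
      apply hmemρ'
      simpa using LinearMap.congr_fun hv'Amap h
    let v : H →ₗ[k] coinv ρ :=
      LinearMap.codRestrict (Subalgebra.toSubmodule (coinv ρ)) vA hvAmem
    let v' : H →ₗ[k] coinv ρ :=
      LinearMap.codRestrict (Subalgebra.toSubmodule (coinv ρ)) v'A hv'Amem
    have hvval : valL ∘ₗ v = vA := rfl
    have hv'val : valL ∘ₗ v' = v'A := rfl
    have hBeq : ∀ w w₁ : H →ₗ[k] coinv ρ, valL ∘ₗ w = valL ∘ₗ w₁ → w = w₁ := by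
      intro w w₁ hw
      ext h
      exact LinearMap.congr_fun hw h
    have hee : valL ∘ₗ unitB ρ = eeA := by
      ext h
      show ((algebraMap k (coinv ρ) (Coalgebra.counit (R := k) h) : coinv ρ) : A)
        = eeA (k := k) (A := A) h
      rw [eeA_apply, ← Algebra.algebraMap_eq_smul_one]
      simp
    refine ⟨v, ⟨⟨v', ?_, ?_⟩, ?_⟩, ?_, ?_⟩
    · refine hBeq _ _ ?_
      rw [hcvB, show valL = ((coinv ρ).val : coinv ρ →ₐ[k] A).toLinearMap from rfl,
        cvv_push ((coinv ρ).val) v v']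
      rw [show ((coinv ρ).val : coinv ρ →ₐ[k] A).toLinearMap = valL from rfl]
      rw [hvval, hv'val, hee]
      rw [hvA, hv'A, cvv_assoc]
      rw [hP1 u₀ t₀ tS hU']
      exact hT
    · refine hBeq _ _ ?_
      rw [hcvB, show valL = ((coinv ρ).val : coinv ρ →ₐ[k] A).toLinearMap from rfl,
        cvv_push ((coinv ρ).val) v' v]
      rw [show ((coinv ρ).val : coinv ρ →ₐ[k] A).toLinearMap = valL from rfl]
      rw [hvval, hv'val, hee]
      rw [hvA, hv'A, cvv_assoc]
      rw [hP1 tS t u₀ hT']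
      exact hU
    · intro h h' ι r
      have hmain : vA ∘ₗ LinearMap.mulRight k h' = cvv (actL (v h')) vA := by
        have rhs : cvv (actL (v h')) vA = cvv t (cvv (kap (vA h')) u₀) := by
          rw [hswap (actL (v h')) vA (hactLmem _) hvAmem, hactL, hvA, cvv_assoc]
          congr 1
          rw [show ((v h' : A)) = vA h' from rfl]
          rw [← cvv_assoc, hP1 u₀ t₀ (kap (vA h')) hU']
        have lhs : vA ∘ₗ LinearMap.mulRight k h' = cvv t (cvv (kap (vA h')) u₀) := by
          rw [hvA, cvv_mulRight _ _ h' (ℛ k h')]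
          have perj : ∀ j ∈ (ℛ k h').index,
              cvv (t ∘ₗ LinearMap.mulRight k ((ℛ k h').left j))
                  (u₀ ∘ₗ LinearMap.mulRight k ((ℛ k h').right j))
              = cvv t (cvv (kap (t ((ℛ k h').left j) * u₀ ((ℛ k h').right j))) u₀) := by
            intro j _
            rw [t_comp_mulRight htm, hu₀, tS_comp_mulRight ht₀m, cvv_assoc]
            rw [← cvv_assoc (kap (t ((ℛ k h').left j))), cvv_kap_kap]
            rfl
          rw [Finset.sum_congr rfl perj]
          rw [show (∑ j ∈ (ℛ k h').index,
              cvv t (cvv (kap (t ((ℛ k h').left j) * u₀ ((ℛ k h').right j))) u₀))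
            = cvv t (cvv (kap (∑ j ∈ (ℛ k h').index,
                t ((ℛ k h').left j) * u₀ ((ℛ k h').right j))) u₀) from by
              rw [kap_sum, cvv_sum_left, cvv_sum_right]]
          rw [← cvv_apply t u₀ h' (ℛ k h')]
        rw [lhs, rhs]
      apply hvalinj
      have e1 := LinearMap.congr_fun hmain h
      simp only [LinearMap.comp_apply, LinearMap.mulRight_apply] at e1
      rw [show valL (v (h * h')) = vA (h * h') from rfl, e1]
      rw [cvv_apply _ _ h r]
      rw [show valL (∑ i ∈ r.index, act (r.left i) (v h') * v (r.right i))
        = ((∑ i ∈ r.index, act (r.left i) (v h') * v (r.right i) : coinv ρ) : A) from rfl]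
      rw [AddSubmonoidClass.coe_finset_sum]
      refine (Finset.sum_congr rfl fun i _ => ?_).symm
      rw [MulMemClass.coe_mul]
      rfl
    · rw [hcv, hvval, hvAt₀]
    · rw [hcv, hvval]
  -- PART 4
  · intro v v₁ hv hv₁
    constructor
    · rintro ⟨b, binv, hb1, hb2, hb⟩
      refine ⟨b, binv, hb1, hb2, ?_⟩
      have hb1' : (b : A) * (binv : A) = 1 := by
        have := congrArg Subtype.val hb1
        simpa using this
      have hvmapEq : valL ∘ₗ v = cvv (cvv (actL b) (kap (binv : A))) (valL ∘ₗ v₁) := by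
        ext h
        rw [LinearMap.comp_apply, show valL (v h) = ((v h : A)) from rfl,
          congrArg Subtype.val (hb h _ (ℛ k h))]
        rw [AddSubmonoidClass.coe_finset_sum, cvv_apply _ _ h (ℛ k h)]
        refine Finset.sum_congr rfl fun i _ => ?_
        rw [cvv_kap_right_apply, MulMemClass.coe_mul, MulMemClass.coe_mul]
        rfl
      intro h
      rw [hcv, hcv]
      have main : cvv (kap (b : A)) (cvv (valL ∘ₗ v) t₀)
          = cvv (cvv (valL ∘ₗ v₁) t₀) (kap (b : A)) := by
        have eL : cvv (kap (b : A)) (cvv (valL ∘ₗ v) t₀)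
            = cvv (actL b) (cvv (valL ∘ₗ v₁) t₀) := by
          rw [hvmapEq, cvv_assoc, cvv_assoc]
          rw [← cvv_assoc (kap (b : A)) (actL b)]
          rw [hswap (kap (b : A)) (actL b) (hkapmem _ b.2) (hactLmem b)]
          rw [cvv_assoc]
          rw [← cvv_assoc (kap (b : A)) (kap (binv : A)), cvv_kap_kap, hb1', kap_one,
            cvv_ee_left]
        have eR : cvv (cvv (valL ∘ₗ v₁) t₀) (kap (b : A))
            = cvv (actL b) (cvv (valL ∘ₗ v₁) t₀) := by
          rw [cvv_assoc, hkey2 b, ← cvv_assoc,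
            hswap (valL ∘ₗ v₁) (actL b) (hvmem v₁) (hactLmem b), cvv_assoc]
        rw [eL, eR]
      have e1 := LinearMap.congr_fun main h
      rwa [cvv_kap_left_apply, cvv_kap_right_apply] at e1
    · rintro ⟨b, binv, hb1, hb2, hb⟩
      refine ⟨b, binv, hb1, hb2, ?_⟩
      have hb2' : (binv : A) * (b : A) = 1 := by
        have := congrArg Subtype.val hb2
        simpa using this
      have hmap : cvv (kap (b : A)) (cvv (valL ∘ₗ v) t₀)
          = cvv (cvv (valL ∘ₗ v₁) t₀) (kap (b : A)) := by
        ext h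
        rw [cvv_kap_left_apply, cvv_kap_right_apply]
        have e0 := hb h
        rw [hcv, hcv] at e0
        exact e0
      have eL : cvv (cvv (kap (b : A)) (cvv (valL ∘ₗ v) t₀)) u₀
          = cvv (kap (b : A)) (valL ∘ₗ v) := by
        rw [cvv_assoc, cvv_assoc, hU, cvv_ee_right]
      have eR : cvv (cvv (cvv (valL ∘ₗ v₁) t₀) (kap (b : A))) u₀
          = cvv (actL b) (valL ∘ₗ v₁) := by
        rw [cvv_assoc, cvv_assoc, ← cvv_assoc t₀, ← hactL b,
          hswap (valL ∘ₗ v₁) (actL b) (hvmem v₁) (hactLmem b)]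
      have step1 : cvv (kap (b : A)) (valL ∘ₗ v) = cvv (actL b) (valL ∘ₗ v₁) := by
        rw [← eL, ← eR, hmap]
      have step2 : valL ∘ₗ v = cvv (cvv (actL b) (kap (binv : A))) (valL ∘ₗ v₁) := by
        calc valL ∘ₗ v = cvv eeA (valL ∘ₗ v) := (cvv_ee_left _).symm
          _ = cvv (kap ((binv : A) * (b : A))) (valL ∘ₗ v) := by rw [hb2', kap_one]
          _ = cvv (cvv (kap (binv : A)) (kap (b : A))) (valL ∘ₗ v) := by rw [cvv_kap_kap]
          _ = cvv (kap (binv : A)) (cvv (kap (b : A)) (valL ∘ₗ v)) := cvv_assoc _ _ _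
          _ = cvv (kap (binv : A)) (cvv (actL b) (valL ∘ₗ v₁)) := by rw [step1]
          _ = cvv (cvv (kap (binv : A)) (actL b)) (valL ∘ₗ v₁) := (cvv_assoc _ _ _).symm
          _ = cvv (cvv (actL b) (kap (binv : A))) (valL ∘ₗ v₁) := by
              rw [hswap (kap (binv : A)) (actL b) (hkapmem _ binv.2) (hactLmem b)]
      intro h ι r
      apply hvalinj
      have e1 := LinearMap.congr_fun step2 h
      rw [show (valL ∘ₗ v) h = valL (v h) from rfl] at e1
      rw [e1, cvv_apply _ _ h r]
      rw [show valL (∑ i ∈ r.index, act (r.left i) b * binv * v₁ (r.right i))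
        = ((∑ i ∈ r.index, act (r.left i) b * binv * v₁ (r.right i) : coinv ρ) : A) from rfl]
      rw [AddSubmonoidClass.coe_finset_sum]
      refine (Finset.sum_congr rfl fun i _ => ?_).symm
      rw [MulMemClass.coe_mul, MulMemClass.coe_mul, cvv_kap_right_apply]
      rfl
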